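/- Let m be an odd positive integer with prime factorization m = ∏_{p ∈ P} p^{k_p}, and let r be an integer coprime to m; let μ_r denote the permutation of ℤ/mℤ given by multiplication by r. Then the sign of μ_r equals (-1)^U, where U = ∑_{p ∈ P} k_p · ((p-1)_2 / ord_p(r)_2), with t_2 denoting the largest power of 2 dividing t and ord_p(r) the multiplicative order of r modulo p. -/

import Mathlib

open Equiv Equiv.Perm Finset

private lemma units_pow_odd (u : ℤˣ) {n : ℕ} (hn : Odd n) : u ^ n = u := by
  obtain ⟨k, rfl⟩ := hn
  rw [pow_add, pow_mul, Int.units_sq, one_pow, one_mul, pow_one]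

private lemma sign_prodCongr {α β : Type*} [DecidableEq α] [Fintype α] [DecidableEq β] [Fintype β]
    (σ : Perm α) (τ : Perm β) :
    sign (σ.prodCongr τ) = sign σ ^ Fintype.card β * sign τ ^ Fintype.card α := by
  have h : σ.prodCongr τ
      = (Equiv.prodCongrRight fun _ => τ) * (Equiv.prodCongrLeft fun _ => σ) := by
    ext ⟨a, b⟩ : 1 <;> simp [Equiv.prodCongrLeft, Equiv.prodCongrRight, Equiv.Perm.mul_apply]
  rw [h, map_mul, sign_prodCongrRight, sign_prodCongrLeft, Finset.prod_const, Finset.prod_const,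
    Finset.card_univ, Finset.card_univ, mul_comm]

private lemma sign_mulLeft_group {G : Type*} [Group G] [Fintype G] [DecidableEq G] (g : G) :
    sign (Equiv.mulLeft g) = (-1 : ℤˣ) ^ (Fintype.card G + Fintype.card G / orderOf g) := by
  rcases eq_or_ne g 1 with rfl | hg
  · rw [Equiv.mulLeft_one, map_one, orderOf_one]
    rw [Nat.div_one, Even.neg_one_pow (Even.add_self _)]
  · set σ : Perm G := Equiv.mulLeft g with hσ
    have hfix : ∀ x : G, σ x ≠ x := by
      intro x hx
      exact hg (mul_eq_right.mp hx)
    have hsupp : σ.support = Finset.univ := by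
      apply Finset.eq_univ_iff_forall.mpr
      intro x; exact Equiv.Perm.mem_support.mpr (hfix x)
    have horder : orderOf σ = orderOf g := by
      apply orderOf_eq_orderOf_iff.mpr
      intro n
      rw [hσ, Equiv.pow_mulLeft]
      constructor
      · intro h
        have := Equiv.congr_fun h 1
        simpa using this
      · intro h; rw [h]; exact Equiv.mulLeft_one
    have hmem : ∀ n ∈ σ.cycleType, n = orderOf g := by
      intro n hn
      have h1 : n ∣ orderOf g := horder ▸ Equiv.Perm.dvd_of_mem_cycleType hn
      rw [Equiv.Perm.cycleType_def, Multiset.mem_map] at hn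
      obtain ⟨c, hc, hcard⟩ := hn
      have hcyc := (Equiv.Perm.mem_cycleFactorsFinset_iff.mp hc).1
      obtain ⟨x, hx⟩ := hcyc.nonempty_support
      have hceq : c = σ.cycleOf x := Equiv.Perm.cycle_is_cycleOf hx hc
      have hpow : (σ ^ n) x = x := by
        have h2 := Equiv.Perm.pow_mod_card_support_cycleOf_self_apply σ n x
        rw [← hceq] at h2
        simp only [Function.comp] at hcard
        rw [hcard, Nat.mod_self] at h2
        simpa using h2.symm
      have hgx : g ^ n * x = x := by
        rw [hσ, Equiv.pow_mulLeft] at hpow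
        simpa using hpow
      exact Nat.dvd_antisymm h1 (orderOf_dvd_of_pow_eq_one (mul_eq_right.mp hgx))
    have hrep : σ.cycleType = Multiset.replicate (Multiset.card σ.cycleType) (orderOf g) :=
      Multiset.eq_replicate_card.mpr hmem
    have hsum : Multiset.card σ.cycleType * orderOf g = Fintype.card G := by
      have h := σ.sum_cycleType
      rw [hrep, Multiset.sum_replicate, smul_eq_mul, hsupp, Finset.card_univ] at h
      linarith
    have hcards : Multiset.card σ.cycleType = Fintype.card G / orderOf g := by
      rw [← hsum, Nat.mul_div_cancel _ (orderOf_pos g)]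
    have hsum2 : σ.cycleType.sum = Fintype.card G := by
      rw [σ.sum_cycleType, hsupp, Finset.card_univ]
    rw [Equiv.Perm.sign_of_cycleType, hsum2, hcards]

private lemma neg_one_pow_eq_of_mod_two {m n : ℕ} (h : m % 2 = n % 2) :
    (-1 : ℤˣ) ^ m = (-1 : ℤˣ) ^ n := by
  rcases Nat.even_or_odd m with hm | hm
  · have hn : Even n := by rw [Nat.even_iff] at *; omega
    rw [hm.neg_one_pow, hn.neg_one_pow]
  · have hn : Odd n := by rw [Nat.odd_iff] at *; omega
    rw [hm.neg_one_pow, hn.neg_one_pow]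

private lemma parity_key {p k d e : ℕ} (hp : p.Prime) (hodd : Odd p)
    (he1 : 0 < e) (hepd : e ∣ p - 1) (hed : e ∣ d) (hde : d ∣ e * p ^ k)
    (hdA : d ∣ p ^ k * (p - 1)) :
    (-1 : ℤˣ) ^ (p ^ k * (p - 1) + p ^ k * (p - 1) / d)
      = (-1 : ℤˣ) ^ (2 ^ padicValNat 2 (p - 1) / 2 ^ padicValNat 2 e) := by
  have hp2 : p ≠ 2 := by rintro rfl; simp [Nat.odd_iff] at hodd
  have hp3 : 3 ≤ p := by have := hp.two_le; omega
  have hpm1 : 0 < p - 1 := by omega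
  have hpk : 0 < p ^ k := Nat.pow_pos hp.pos
  have hA : 0 < p ^ k * (p - 1) := Nat.mul_pos hpk hpm1
  set A := p ^ k * (p - 1) with hAdef
  have hd0 : 0 < d := Nat.pos_of_dvd_of_pos hdA hA
  have hAd : 0 < A / d := Nat.div_pos (Nat.le_of_dvd hA hdA) hd0
  -- switch to factorization
  have hval : ∀ n : ℕ, padicValNat 2 n = n.factorization 2 := fun n =>
    (Nat.factorization_def n Nat.prime_two).symm
  have hnot2p : ¬ (2 ∣ p) := by
    intro h; rw [Nat.odd_iff] at hodd; omega
  have hfp : p.factorization 2 = 0 := Nat.factorization_eq_zero_of_not_dvd hnot2p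
  have hfpk : (p ^ k).factorization 2 = 0 := by
    rw [Nat.factorization_pow]; simp [hfp]
  set a := e.factorization 2 with hadef
  set b := (p - 1).factorization 2 with hbdef
  have hmono : ∀ {x y : ℕ}, x ≠ 0 → y ≠ 0 → x ∣ y → x.factorization 2 ≤ y.factorization 2 := by
    intro x y hx hy hxy
    exact (Nat.factorization_le_iff_dvd hx hy).2 hxy 2
  have hab : a ≤ b := hmono he1.ne' (by omega) hepd
  have hfd : d.factorization 2 = a := by
    apply le_antisymm
    · have h1 : d.factorization 2 ≤ (e * p ^ k).factorization 2 :=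
        hmono hd0.ne' (by positivity) hde
      rwa [Nat.factorization_mul he1.ne' hpk.ne', Finsupp.add_apply, hfpk, add_zero] at h1
    · exact hmono he1.ne' hd0.ne' hed
  have hfA : A.factorization 2 = b := by
    rw [hAdef, Nat.factorization_mul hpk.ne' (by omega), Finsupp.add_apply, hfpk, zero_add]
  have hfAd : (A / d).factorization 2 = b - a := by
    have hmul : d * (A / d) = A := Nat.mul_div_cancel' hdA
    have := congrArg (fun t => t.factorization 2) hmul
    rw [Nat.factorization_mul hd0.ne' hAd.ne', Finsupp.add_apply, hfd, hfA] at this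
    omega
  have hAeven : A % 2 = 0 := by
    have : 2 ∣ A := Dvd.dvd.mul_left (by omega : 2 ∣ (p-1)) _
    omega
  rw [hval, hval, ← hadef, ← hbdef, Nat.pow_div hab (by norm_num)]
  apply neg_one_pow_eq_of_mod_two
  rcases Nat.eq_or_lt_of_le hab with heq | hlt
  · -- a = b : both odd
    have h1 : ¬ 2 ∣ (A / d) := by
      intro h
      have := Nat.Prime.factorization_pos_of_dvd Nat.prime_two hAd.ne' h
      omega
    have h2 : b - a = 0 := by omega
    rw [h2, pow_zero]
    rw [Nat.two_dvd_ne_zero] at h1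
    omega
  · -- a < b : both even
    have h1 : 2 ∣ A / d := by
      have h2 : (2:ℕ) ^ ((A/d).factorization 2) ∣ A / d := Nat.ordProj_dvd _ _
      rw [hfAd] at h2
      exact dvd_trans (dvd_pow_self 2 (by omega : b - a ≠ 0)) h2
    have h3 : 2 ∣ 2 ^ (b - a) := dvd_pow_self 2 (by omega)
    omega

private lemma isUnit_intCast_of_isCoprime {n : ℕ} {r : ℤ} (h : IsCoprime r (n : ℤ)) :
    IsUnit (r : ZMod n) := by
  obtain ⟨u, v, huv⟩ := h
  have h3 := congrArg (fun t : ℤ => (t : ZMod n)) huv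
  push_cast at h3
  simp only [ZMod.natCast_self, mul_zero, add_zero] at h3
  exact IsUnit.of_mul_eq_one _ ((mul_comm _ _).trans h3)

private lemma sign_zmod_prime_pow (p : ℕ) (hp : p.Prime) (hodd : Odd p) (r : ℤ)
    (hr : IsCoprime r (p : ℤ)) :
    ∀ (k : ℕ) [NeZero (p ^ k)] (σ : Equiv.Perm (ZMod (p ^ k))),
      (∀ z, σ z = (r : ZMod (p ^ k)) * z) →
      Equiv.Perm.sign σ = (-1) ^
        (k * (2 ^ padicValNat 2 (p - 1) / 2 ^ padicValNat 2 (orderOf ((r : ZMod p))))) := by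
  haveI : Fact p.Prime := ⟨hp⟩
  intro k
  induction k with
  | zero =>
    intro _ σ hσ
    haveI : Subsingleton (ZMod (p ^ 0)) := by
      rw [pow_zero]; infer_instance
    have hσ1 : σ = 1 := Equiv.ext fun z => Subsingleton.elim _ _
    rw [hσ1, map_one, zero_mul, pow_zero]
  | succ k ih =>
    intro _ σ hσ
    haveI hk0 : NeZero (p ^ k) := ⟨pow_ne_zero _ hp.pos.ne'⟩
    classical
    set q := 2 ^ padicValNat 2 (p - 1) / 2 ^ padicValNat 2 (orderOf ((r : ZMod p))) with hq
    have hZp : Prime (p : ℤ) := Nat.prime_iff_prime_int.1 hp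
    have hNc : ((p ^ (k + 1) : ℕ) : ℤ) = (p : ℤ) ^ (k + 1) := by push_cast; ring
    have hcop : ∀ j : ℕ, IsCoprime r ((p ^ j : ℕ) : ℤ) := by
      intro j; push_cast; exact hr.pow_right
    have huN : IsUnit (r : ZMod (p ^ (k + 1))) := isUnit_intCast_of_isCoprime (hcop (k + 1))
    have huk : IsUnit (r : ZMod (p ^ k)) := isUnit_intCast_of_isCoprime (hcop k)
    have hup : IsUnit (r : ZMod p) := isUnit_intCast_of_isCoprime hr
    -- the additive embedding ZMod (p^k) → ZMod (p^(k+1))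
    let F : ℤ →+ ZMod (p ^ (k + 1)) :=
      (AddMonoidHom.mulLeft (p : ZMod (p ^ (k + 1)))).comp (Int.castAddHom (ZMod (p ^ (k + 1))))
    have hF : F (((p ^ k : ℕ) : ℤ)) = 0 := by
      show (p : ZMod (p ^ (k + 1))) * (((p ^ k : ℕ) : ℤ) : ZMod (p ^ (k + 1))) = 0
      have h0 : ((p ^ (k + 1) : ℕ) : ZMod (p ^ (k + 1))) = 0 := ZMod.natCast_self _
      push_cast at h0 ⊢
      rw [← pow_succ']
      exact h0
    let f0 : ZMod (p ^ k) →+ ZMod (p ^ (k + 1)) := ZMod.lift (p ^ k) ⟨F, hF⟩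
    have key : ∀ t : ℤ, f0 ((t : ZMod (p ^ k)))
        = (p : ZMod (p ^ (k + 1))) * (t : ZMod (p ^ (k + 1))) :=
      fun t => ZMod.lift_coe _ _ t
    have hp0 : (p : ℤ) ≠ 0 := Int.natCast_ne_zero.mpr hp.pos.ne'
    have hinj : Function.Injective f0 := by
      rw [injective_iff_map_eq_zero]
      intro z hz
      obtain ⟨t, rfl⟩ := ZMod.intCast_surjective z
      rw [key] at hz
      have hz' : (((p : ℤ) * t : ℤ) : ZMod (p ^ (k + 1))) = 0 := by push_cast; exact hz
      rw [ZMod.intCast_zmod_eq_zero_iff_dvd, hNc, pow_succ'] at hz'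
      have ht : (p : ℤ) ^ k ∣ t := (mul_dvd_mul_iff_left hp0).1 hz'
      rw [ZMod.intCast_zmod_eq_zero_iff_dvd]
      push_cast
      exact ht
    have hnon : ∀ z : ZMod (p ^ k), ¬ IsUnit (f0 z) := by
      intro z hz
      obtain ⟨t, rfl⟩ := ZMod.intCast_surjective z
      rw [key] at hz
      have h2 := hz.map (ZMod.castHom (dvd_pow_self p (Nat.succ_ne_zero k)) (ZMod p))
      rw [map_mul, map_natCast, map_intCast, ZMod.natCast_self, zero_mul] at h2
      exact not_isUnit_zero h2
    have hsurj : ∀ x : {x : ZMod (p ^ (k + 1)) // ¬ IsUnit x},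
        ∃ z, f0 z = (x : ZMod (p ^ (k + 1))) := by
      rintro ⟨x, hx⟩
      obtain ⟨s, rfl⟩ := ZMod.intCast_surjective x
      by_cases hps : (p : ℤ) ∣ s
      · obtain ⟨w, rfl⟩ := hps
        exact ⟨(w : ZMod (p ^ k)), by rw [key]; push_cast; ring⟩
      · exfalso
        apply hx
        apply isUnit_intCast_of_isCoprime (n := p ^ (k + 1))
        rw [hNc]
        exact ((hZp.coprime_iff_not_dvd).2 hps).symm.pow_right
    let fE : ZMod (p ^ k) ≃ {x : ZMod (p ^ (k + 1)) // ¬ IsUnit x} :=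
      Equiv.ofBijective (fun z => ⟨f0 z, hnon z⟩)
        ⟨fun a b hab => hinj (Subtype.ext_iff.mp hab),
         fun x => (hsurj x).imp fun z hz => Subtype.ext hz⟩
    let gE : (ZMod (p ^ (k + 1)))ˣ ≃ {x : ZMod (p ^ (k + 1)) // IsUnit x} :=
      { toFun := fun v => ⟨v, v.isUnit⟩
        invFun := fun x => x.2.unit
        left_inv := fun v => Units.ext v.isUnit.unit_spec
        right_inv := fun x => Subtype.ext x.2.unit_spec }
    set u : (ZMod (p ^ (k + 1)))ˣ := huN.unit with hu
    set u' : (ZMod (p ^ k))ˣ := huk.unit with hu'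
    let τ : Equiv.Perm (ZMod (p ^ k)) := Units.mulLeft u'
    have hτ : ∀ z, τ z = (r : ZMod (p ^ k)) * z := fun z => by
      show (u' : ZMod (p ^ k)) * z = _
      rw [hu', IsUnit.unit_spec]
    let E : ((ZMod (p ^ (k + 1)))ˣ ⊕ ZMod (p ^ k)) ≃ ZMod (p ^ (k + 1)) :=
      (Equiv.sumCongr gE fE).trans (Equiv.sumCompl IsUnit)
    have hE : ∀ x, E ((Equiv.sumCongr (Equiv.mulLeft u) τ) x) = σ (E x) := by
      rintro (v | z)
      · show ((u * v : (ZMod (p ^ (k + 1)))ˣ) : ZMod (p ^ (k + 1))) = σ (v : ZMod (p ^ (k + 1)))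
        rw [hσ, Units.val_mul, hu, IsUnit.unit_spec]
      · show f0 (τ z) = σ (f0 z)
        rw [hσ, hτ]
        obtain ⟨t, rfl⟩ := ZMod.intCast_surjective z
        rw [← Int.cast_mul, key, key]
        push_cast
        ring
    rw [← Equiv.Perm.sign_eq_sign_of_equiv _ _ E hE, Equiv.Perm.sign_sumCongr]
    have hcard : Fintype.card (ZMod (p ^ (k + 1)))ˣ = p ^ k * (p - 1) := by
      rw [ZMod.card_units_eq_totient, Nat.totient_prime_pow hp (Nat.succ_pos k)]
      simp
    set d := orderOf u with hd
    set e := orderOf ((r : ZMod p)) with he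
    set u1 : (ZMod p)ˣ := hup.unit with hu1
    have heu1 : e = orderOf u1 := by
      rw [he, ← orderOf_units, hu1, IsUnit.unit_spec]
    have he1 : 0 < e := heu1 ▸ orderOf_pos u1
    have hepd : e ∣ p - 1 := by
      rw [heu1, ← ZMod.card_units p]
      exact orderOf_dvd_card
    have hmapu : Units.map (ZMod.castHom (dvd_pow_self p (Nat.succ_ne_zero k))
        (ZMod p)).toMonoidHom u = u1 := by
      apply Units.ext
      show (ZMod.castHom _ (ZMod p)) ((u : ZMod (p ^ (k + 1)))) = (u1 : ZMod p)
      rw [hu, hu1, IsUnit.unit_spec, IsUnit.unit_spec, map_intCast]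
    have hed : e ∣ d := by
      rw [heu1, ← hmapu]
      exact orderOf_map_dvd _ u
    have hre : ((r ^ e - 1 : ℤ) : ZMod p) = 0 := by
      push_cast
      rw [he, pow_orderOf_eq_one, sub_self]
    have hdvd1 : (p : ℤ) ∣ r ^ e - 1 := (ZMod.intCast_zmod_eq_zero_iff_dvd _ _).1 hre
    have hdvd2 : ((p : ℤ)) ^ (k + 1) ∣ (r ^ e) ^ (p ^ k) - 1 := by
      simpa using dvd_sub_pow_of_dvd_sub hdvd1 k
    have hpow1 : (r : ZMod (p ^ (k + 1))) ^ (e * p ^ k) = 1 := by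
      have h3 : ((r ^ (e * p ^ k) - 1 : ℤ) : ZMod (p ^ (k + 1))) = 0 := by
        rw [ZMod.intCast_zmod_eq_zero_iff_dvd, hNc, pow_mul]
        exact hdvd2
      push_cast at h3
      exact sub_eq_zero.mp h3
    have hueq : u ^ (e * p ^ k) = 1 :=
      Units.ext (by rw [Units.val_pow_eq_pow_val, hu, IsUnit.unit_spec, hpow1, Units.val_one])
    have hde : d ∣ e * p ^ k := orderOf_dvd_of_pow_eq_one hueq
    have hdA : d ∣ p ^ k * (p - 1) := hcard ▸ orderOf_dvd_card
    rw [sign_mulLeft_group u, ih τ hτ, hcard, parity_key hp hodd he1 hepd hed hde hdA, ← hq,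
      ← pow_add]
    congr 1
    ring

private lemma main_aux : ∀ (m : ℕ) [NeZero m], Odd m → ∀ (r : ℤ), IsCoprime r (m : ℤ) →
    ∀ (σ : Equiv.Perm (ZMod m)), (∀ z, σ z = (r : ZMod m) * z) →
    Equiv.Perm.sign σ =
      (-1) ^ (∑ p ∈ m.primeFactors,
        m.factorization p *
          (2 ^ padicValNat 2 (p - 1) / 2 ^ padicValNat 2 (orderOf ((r : ZMod p))))) := by
  intro m
  induction m using Nat.recOnPosPrimePosCoprime with
  | prime_pow p n hp' hn =>
    intro _ hodd r hr σ hσ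
    have hpp : p.Prime := hp'
    have hop : Odd p := by
      rcases Nat.even_or_odd p with hev | h
      · exact absurd (Nat.even_pow.mpr ⟨hev, hn.ne'⟩) (Nat.not_even_iff_odd.mpr hodd)
      · exact h
    have hr' : IsCoprime r ((p : ℤ) ^ n) := by
      have := hr; push_cast at this; exact this
    have hrp : IsCoprime r (p : ℤ) :=
      IsCoprime.of_isCoprime_of_dvd_right hr' (dvd_pow_self _ hn.ne')
    rw [sign_zmod_prime_pow p hpp hop r hrp n σ hσ]
    congr 1
    rw [Nat.primeFactors_pow _ hn.ne', hpp.primeFactors, Finset.sum_singleton,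
      hpp.factorization_pow]
    simp
  | zero =>
    intro inst
    exact absurd rfl inst.out
  | one =>
    intro _ _ r _ σ hσ
    have hσ1 : σ = 1 := Equiv.ext fun z => Subsingleton.elim _ _
    rw [hσ1, map_one]
    simp
  | coprime a b ha hb hab iha ihb =>
    intro _ hodd r hr σ hσ
    haveI : NeZero a := ⟨by omega⟩
    haveI : NeZero b := ⟨by omega⟩
    have ha0 : a ≠ 0 := by omega
    have hb0 : b ≠ 0 := by omega
    have hoa : Odd a := (Nat.odd_mul.mp hodd).1
    have hob : Odd b := (Nat.odd_mul.mp hodd).2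
    have hr' : IsCoprime r ((a : ℤ) * (b : ℤ)) := by
      have := hr; push_cast at this; exact this
    have hra : IsCoprime r (a : ℤ) :=
      IsCoprime.of_isCoprime_of_dvd_right hr' (dvd_mul_right _ _)
    have hrb : IsCoprime r (b : ℤ) :=
      IsCoprime.of_isCoprime_of_dvd_right hr' (dvd_mul_left _ _)
    have hua : IsUnit (r : ZMod a) := isUnit_intCast_of_isCoprime hra
    have hub : IsUnit (r : ZMod b) := isUnit_intCast_of_isCoprime hrb
    let σa : Perm (ZMod a) := Units.mulLeft hua.unit
    let σb : Perm (ZMod b) := Units.mulLeft hub.unit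
    have hσa : ∀ y, σa y = (r : ZMod a) * y := fun y => by
      show (hua.unit : ZMod a) * y = _
      rw [IsUnit.unit_spec]
    have hσb : ∀ y, σb y = (r : ZMod b) * y := fun y => by
      show (hub.unit : ZMod b) * y = _
      rw [IsUnit.unit_spec]
    let C : ZMod (a * b) ≃+* ZMod a × ZMod b := ZMod.chineseRemainder hab
    have hh : ∀ x, C.toEquiv (σ x) = (Equiv.prodCongr σa σb) (C.toEquiv x) := by
      intro x
      show C (σ x) = (σa (C x).1, σb (C x).2)
      have h1 : C ((r : ZMod (a * b))) = ((r : ZMod a), (r : ZMod b)) :=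
        map_intCast (C : ZMod (a * b) →+* ZMod a × ZMod b) r
      rw [hσ, map_mul, h1, hσa, hσb]
      rfl
    rw [Equiv.Perm.sign_eq_sign_of_equiv σ (Equiv.prodCongr σa σb) C.toEquiv hh,
      sign_prodCongr σa σb]
    rw [iha hoa r hra σa hσa, ihb hob r hrb σb hσb]
    rw [ZMod.card a, ZMod.card b]
    rw [units_pow_odd _ hob, units_pow_odd _ hoa, ← pow_add]
    congr 1
    rw [hab.primeFactors_mul, Finset.sum_union (Nat.Coprime.disjoint_primeFactors hab)]
    have hfm : ∀ p : ℕ, (a * b).factorization p = a.factorization p + b.factorization p := by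
      intro p
      rw [Nat.factorization_mul ha0 hb0]
      rfl
    have hza : ∀ p ∈ a.primeFactors, (a * b).factorization p = a.factorization p := by
      intro p hpA
      have hpb : p ∉ b.primeFactors :=
        Finset.disjoint_left.mp (Nat.Coprime.disjoint_primeFactors hab) hpA
      have : b.factorization p = 0 := by
        rw [← Nat.support_factorization] at hpb
        exact Finsupp.notMem_support_iff.mp hpb
      rw [hfm, this, add_zero]
    have hzb : ∀ p ∈ b.primeFactors, (a * b).factorization p = b.factorization p := by
      intro p hpB
      have hpa : p ∉ a.primeFactors :=
        Finset.disjoint_right.mp (Nat.Coprime.disjoint_primeFactors hab) hpB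
      have : a.factorization p = 0 := by
        rw [← Nat.support_factorization] at hpa
        exact Finsupp.notMem_support_iff.mp hpa
      rw [hfm, this, zero_add]
    congr 1
    · exact Finset.sum_congr rfl fun p hp => by rw [hza p hp]
    · exact Finset.sum_congr rfl fun p hp => by rw [hzb p hp]

theorem sign_mul_perm_zmod_primeFactors (m : ℕ) [NeZero m] (hm : Odd m) (r : ℤ)
    (hr : IsCoprime r (m : ℤ)) (σ : Equiv.Perm (ZMod m))
    (hσ : ∀ z : ZMod m, σ z = (r : ZMod m) * z) :
    Equiv.Perm.sign σ =
      (-1) ^ (∑ p ∈ m.primeFactors,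
        m.factorization p *
          (2 ^ padicValNat 2 (p - 1) / 2 ^ padicValNat 2 (orderOf ((r : ZMod p))))) :=
  main_aux m hm r hr σ hσ
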